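/- Let k ≥ 2 be an integer. Then there exist pairwise distinct nonzero integers c_1, …, c_k with −k^{k−1} ≤ c_i ≤ k^{k−1} for all i and c_1 + … + c_k = 0, such that for every prime p > (k+1)·k^{k−1} the following holds: if l_1, …, l_k are nonnegative integers with l_1·c_1 + … + l_k·c_k ≡ 0 (mod p), then either l_1 = … = l_k = 0, or l_1 = … = l_k = 1, or l_1 + … + l_k > k. -/

import Mathlib

open Finset

private lemma geom_lt' {k : ℕ} (hk : 2 ≤ k) (n : ℕ) : ∑ j ∈ range n, k ^ j < k ^ n := by
  induction n with
  | zero => simp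
  | succ n ih =>
    rw [Finset.sum_range_succ, pow_succ]
    have : k ^ n * 2 ≤ k ^ n * k := Nat.mul_le_mul_left _ hk
    omega

private lemma digit_lemma' {k : ℕ} (hk : 2 ≤ k) :
    ∀ (n : ℕ) (a : ℕ → ℕ) (m : ℕ), m < k → (∀ i < n, a i < k) →
    (∑ i ∈ range n, a i * k ^ i = m * ∑ i ∈ range n, k ^ i) →
    ∀ i < n, a i = m := by
  intro n
  induction n with
  | zero => intro a m _ _ _ i hi; omega
  | succ n ih =>
    intro a m hm ha heq
    rw [Finset.sum_range_succ', Finset.sum_range_succ'] at heq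
    simp only [pow_zero, mul_one] at heq
    have e1 : ∑ i ∈ range n, a (i + 1) * k ^ (i + 1)
        = (∑ i ∈ range n, a (i + 1) * k ^ i) * k := by
      rw [Finset.sum_mul]; exact Finset.sum_congr rfl (fun i _ => by ring)
    have e2 : ∑ i ∈ range n, k ^ (i + 1) = (∑ i ∈ range n, k ^ i) * k := by
      rw [Finset.sum_mul]; exact Finset.sum_congr rfl (fun i _ => by ring)
    rw [e1, e2] at heq
    set A := ∑ i ∈ range n, a (i + 1) * k ^ i with hA
    set B := ∑ i ∈ range n, k ^ i with hB
    -- heq : A * k + a 0 = m * (B * k + 1)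
    have ha0 : a 0 < k := ha 0 (by omega)
    have h0 : a 0 = m := by
      have h1 : (a 0 + A * k) % k = (m + (m * B) * k) % k := by
        congr 1; rw [add_comm, heq]; ring
      rwa [Nat.add_mul_mod_self_right, Nat.add_mul_mod_self_right,
        Nat.mod_eq_of_lt ha0, Nat.mod_eq_of_lt hm] at h1
    have hAB : A = m * B := by
      have h2 : A * k = (m * B) * k := by
        have : A * k + a 0 = m * B * k + m := by rw [heq]; ring
        omega
      exact Nat.eq_of_mul_eq_mul_right (by omega) h2
    have hrec := ih (fun i => a (i + 1)) m hm (fun i hi => ha (i + 1) (by omega)) hAB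
    intro i hi
    cases i with
    | zero => exact h0
    | succ j => exact hrec j (by omega)

theorem stmt0 (k : ℕ) (hk : 2 ≤ k) :
    ∃ c : Fin k → ℤ, Function.Injective c ∧ (∀ i, c i ≠ 0) ∧
      (∀ i, -((k : ℤ) ^ (k - 1)) ≤ c i ∧ c i ≤ (k : ℤ) ^ (k - 1)) ∧
      (∑ i, c i) = 0 ∧
      ∀ p : ℕ, p.Prime → ((k : ℤ) + 1) * (k : ℤ) ^ (k - 1) < (p : ℤ) →
        ∀ l : Fin k → ℕ, (p : ℤ) ∣ (∑ i, (l i : ℤ) * c i) →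
          (∀ i, l i = 0) ∨ (∀ i, l i = 1) ∨ k < ∑ i, l i := by
  set S : ℕ := ∑ j ∈ range (k - 1), k ^ j with hSdef
  have hS1 : 1 ≤ S := by
    have : 0 ∈ range (k - 1) := by simp; omega
    calc 1 = k ^ 0 := by simp
    _ ≤ S := Finset.single_le_sum (f := fun j => k ^ j) (fun i _ => Nat.zero_le _) this
  have hSlt : S < k ^ (k - 1) := geom_lt' hk (k - 1)
  set c : Fin k → ℤ := fun i => if (i : ℕ) < k - 1 then (k : ℤ) ^ (i : ℕ) else -(S : ℤ)
    with hcdef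
  have hkpos : (0 : ℤ) < (k : ℤ) := by positivity
  have hpow_pos : ∀ i : ℕ, (0 : ℤ) < (k : ℤ) ^ i := fun i => by positivity
  have hpow_le : ∀ i : ℕ, i ≤ k - 1 → (k : ℤ) ^ i ≤ (k : ℤ) ^ (k - 1) := by
    intro i hi
    exact pow_le_pow_right₀ (by exact_mod_cast (by omega : 1 ≤ k)) hi
  have habs : ∀ i : Fin k, |c i| ≤ (k : ℤ) ^ (k - 1) := by
    intro i
    simp only [hcdef]
    split
    · rw [abs_of_pos (hpow_pos _)]
      exact hpow_le _ (by omega)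
    · rw [abs_neg, abs_of_pos (by exact_mod_cast hS1)]
      exact_mod_cast hSlt.le
  refine ⟨c, ?_, ?_, ?_, ?_, ?_⟩
  · -- injective
    intro i j hij
    simp only [hcdef] at hij
    by_cases hi : (i : ℕ) < k - 1 <;> by_cases hj : (j : ℕ) < k - 1 <;>
      simp only [hi, hj, if_true, if_false, if_pos, if_neg] at hij
    · have : (i : ℕ) = (j : ℕ) := by
        have : (k : ℤ) ^ (i : ℕ) = (k : ℤ) ^ (j : ℕ) := hij
        have h2 : (k ^ (i : ℕ) : ℕ) = k ^ (j : ℕ) := by exact_mod_cast this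
        exact Nat.pow_right_injective hk h2
      exact Fin.ext this
    · exfalso
      have := hpow_pos (i : ℕ)
      have hSpos : (0 : ℤ) < (S : ℤ) := by exact_mod_cast hS1
      omega
    · exfalso
      have := hpow_pos (j : ℕ)
      have hSpos : (0 : ℤ) < (S : ℤ) := by exact_mod_cast hS1
      omega
    · exact Fin.ext (by omega)
  · -- nonzero
    intro i
    simp only [hcdef]
    split
    · exact (hpow_pos _).ne'
    · have hSpos : (0 : ℤ) < (S : ℤ) := by exact_mod_cast hS1
      omega
  · -- bounds
    intro i
    have h := habs i
    constructor
    · linarith [neg_abs_le (c i)]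
    · linarith [le_abs_self (c i)]
  · -- sum zero
    have : ∑ i : Fin k, c i =
        ∑ i ∈ range k, (if i < k - 1 then (k : ℤ) ^ i else -(S : ℤ)) := by
      rw [← Fin.sum_univ_eq_sum_range]
    rw [this]
    have hk1 : k - 1 + 1 = k := by omega
    have hrs : range k = range ((k - 1) + 1) := by rw [hk1]
    rw [hrs, Finset.sum_range_succ]
    have : ∑ i ∈ range (k - 1), (if i < k - 1 then (k : ℤ) ^ i else -(S : ℤ))
        = ∑ i ∈ range (k - 1), (k : ℤ) ^ i := by
      apply Finset.sum_congr rfl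
      intro i hi
      rw [if_pos (Finset.mem_range.mp hi)]
    rw [this, if_neg (by omega)]
    have : ((S : ℤ)) = ∑ i ∈ range (k - 1), (k : ℤ) ^ i := by
      rw [hSdef]; push_cast; ring
    omega
  · -- main
    intro p hp hpk l hdvd
    by_cases hbig : k < ∑ i, l i
    · exact Or.inr (Or.inr hbig)
    push_neg at hbig
    -- |T| < p, so T = 0
    have hT0 : (∑ i, (l i : ℤ) * c i) = 0 := by
      apply Int.eq_zero_of_abs_lt_dvd hdvd
      calc |∑ i, (l i : ℤ) * c i| ≤ ∑ i, |(l i : ℤ) * c i| := Finset.abs_sum_le_sum_abs _ _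
        _ ≤ ∑ i, (l i : ℤ) * (k : ℤ) ^ (k - 1) := by
            apply Finset.sum_le_sum
            intro i _
            rw [abs_mul, abs_of_nonneg (by positivity : (0:ℤ) ≤ (l i : ℤ))]
            exact mul_le_mul_of_nonneg_left (habs i) (by positivity)
        _ = (∑ i, (l i : ℤ)) * (k : ℤ) ^ (k - 1) := by rw [Finset.sum_mul]
        _ ≤ (k : ℤ) * (k : ℤ) ^ (k - 1) := by
            apply mul_le_mul_of_nonneg_right _ (by positivity)
            exact_mod_cast (by push_cast; exact_mod_cast hbig : (∑ i, (l i : ℤ)) ≤ (k : ℤ))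
        _ < ((k : ℤ) + 1) * (k : ℤ) ^ (k - 1) := by
            apply mul_lt_mul_of_pos_right _ (by positivity)
            omega
        _ < (p : ℤ) := hpk
    -- translate to ℕ
    set a : ℕ → ℕ := fun i => if h : i < k then l ⟨i, h⟩ else 0 with hadef
    have hal : ∀ i : Fin k, a (i : ℕ) = l i := by
      intro i; simp [hadef, i.isLt]
    set m : ℕ := a (k - 1) with hmdef
    have hk1 : k - 1 + 1 = k := by omega
    have hTsplit : (∑ i, (l i : ℤ) * c i)
        = ∑ i ∈ range (k - 1), (a i : ℤ) * (k : ℤ) ^ i - (m : ℤ) * (S : ℤ) := by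
      have h1 : ∑ i : Fin k, (l i : ℤ) * c i
          = ∑ i ∈ range k, ((a i : ℤ) * (if i < k - 1 then (k : ℤ) ^ i else -(S : ℤ))) := by
        rw [← Fin.sum_univ_eq_sum_range]
        apply Finset.sum_congr rfl
        intro i _
        rw [hal i]
      have hrs : range k = range ((k - 1) + 1) := by rw [hk1]
      rw [h1, hrs, Finset.sum_range_succ, if_neg (by omega)]
      have : ∑ i ∈ range (k - 1), ((a i : ℤ) * (if i < k - 1 then (k : ℤ) ^ i else -(S : ℤ)))
          = ∑ i ∈ range (k - 1), (a i : ℤ) * (k : ℤ) ^ i := by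
        apply Finset.sum_congr rfl
        intro i hi
        rw [if_pos (Finset.mem_range.mp hi)]
      rw [this]; ring
    have hE : ∑ i ∈ range (k - 1), a i * k ^ i = m * S := by
      have : (↑(∑ i ∈ range (k - 1), a i * k ^ i) : ℤ) = ((m * S : ℕ) : ℤ) := by
        push_cast
        rw [hTsplit] at hT0
        linarith
      exact_mod_cast this
    have hsuml : ∑ i, l i = (∑ i ∈ range (k - 1), a i) + m := by
      have : ∑ i : Fin k, l i = ∑ i ∈ range k, a i := by
        rw [← Fin.sum_univ_eq_sum_range]
        exact Finset.sum_congr rfl (fun i _ => (hal i).symm)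
      have hrs : range k = range ((k - 1) + 1) := by rw [hk1]
      rw [this, hrs, Finset.sum_range_succ]
    rcases Nat.eq_zero_or_pos m with hm0 | hmpos
    · -- m = 0 : all zero
      left
      have hz : ∀ i ∈ range (k - 1), a i * k ^ i = 0 := by
        rw [← Finset.sum_eq_zero_iff, hE, hm0, Nat.zero_mul]
      intro i
      rw [← hal i]
      by_cases hi : (i : ℕ) < k - 1
      · have := hz (i : ℕ) (Finset.mem_range.mpr hi)
        have hkp : 0 < k ^ (i : ℕ) := Nat.pow_pos (by omega)
        exact Nat.mul_eq_zero.mp this |>.resolve_right (by omega)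
      · have : (i : ℕ) = k - 1 := by omega
        rw [this, ← hmdef, hm0]
    · -- m ≥ 1
      have hm_lt : m < k := by
        by_contra hmk
        push_neg at hmk
        have h1 : ∑ i ∈ range (k - 1), a i = 0 := by omega
        have h2 : ∑ i ∈ range (k - 1), a i * k ^ i = 0 := by
          apply Finset.sum_eq_zero
          intro i hi
          have := Finset.sum_eq_zero_iff.mp h1 i hi
          simp [this]
        rw [h2] at hE
        have : m * S ≥ k * 1 := Nat.mul_le_mul hmk hS1
        omega
      have ha_lt : ∀ i < k - 1, a i < k := by
        intro i hi
        have : a i ≤ ∑ j ∈ range (k - 1), a j :=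
          Finset.single_le_sum (fun j _ => Nat.zero_le _) (Finset.mem_range.mpr hi)
        omega
      have hall := digit_lemma' hk (k - 1) a m hm_lt ha_lt hE
      have hsum' : ∑ i ∈ range (k - 1), a i = (k - 1) * m := by
        rw [Finset.sum_congr rfl (fun i hi => hall i (Finset.mem_range.mp hi))]
        rw [Finset.sum_const, Finset.card_range, smul_eq_mul]
      have hkm : k * m ≤ k := by
        have : (k - 1) * m + m ≤ k := by omega
        have hkk : (k - 1) * m + m = k * m := by
          have h := hk1
          calc (k - 1) * m + m = ((k - 1) + 1) * m := by ring
          _ = k * m := by rw [h]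
        omega
      have hm1 : m = 1 := by
        rcases Nat.lt_or_ge m 2 with h | h
        · omega
        · exfalso; nlinarith
      right; left
      intro i
      rw [← hal i]
      by_cases hi : (i : ℕ) < k - 1
      · rw [hall (i : ℕ) hi, hm1]
      · have : (i : ℕ) = k - 1 := by omega
        rw [this, ← hmdef, hm1]
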